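/- A real symmetric n×n matrix A whose off-diagonal entries are all strictly negative has a simple smallest eigenvalue, and the corresponding eigenvector can be chosen with all components strictly positive. -/

import Mathlib

open Matrix

private lemma rayleigh_min' {n : ℕ} {A : Matrix (Fin n) (Fin n) ℝ} (hA : A.IsHermitian) {μ : ℝ}
    (hμ : ∀ i, μ ≤ hA.eigenvalues i) (x : Fin n → ℝ) :
    μ * (x ⬝ᵥ x) ≤ x ⬝ᵥ (A *ᵥ x) := by
  set U : Matrix (Fin n) (Fin n) ℝ := (hA.eigenvectorUnitary : Matrix (Fin n) (Fin n) ℝ) with hU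
  have hUU : U * star U = 1 := Unitary.mul_star_self_of_mem (hA.eigenvectorUnitary).2
  set y := (star U) *ᵥ x with hy
  have hx : U *ᵥ y = x := by
    rw [hy, mulVec_mulVec, hUU, one_mulVec]
  have hdot : ∀ z : Fin n → ℝ, x ⬝ᵥ (U *ᵥ z) = y ⬝ᵥ z := by
    intro z
    rw [dotProduct_mulVec, hy]
    congr 1
    ext i
    simp [vecMul, mulVec, dotProduct, mul_comm]
  have h1 : x ⬝ᵥ x = y ⬝ᵥ y := by
    calc x ⬝ᵥ x = x ⬝ᵥ (U *ᵥ y) := by rw [hx]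
    _ = y ⬝ᵥ y := hdot y
  have h2 : x ⬝ᵥ (A *ᵥ x) = ∑ i, hA.eigenvalues i * y i ^ 2 := by
    conv_lhs => rw [hA.spectral_theorem, Unitary.conjStarAlgAut_apply]
    rw [← mulVec_mulVec, ← mulVec_mulVec, hdot]
    simp [dotProduct, mulVec_diagonal, pow_two]
    exact Finset.sum_congr rfl fun i _ => by ring
  rw [h1, h2, dotProduct, Finset.mul_sum]
  apply Finset.sum_le_sum
  intro i _
  nlinarith [hμ i, sq_nonneg (y i)]

theorem perron_frobenius_smallest_eigenvalue (n : ℕ) (hn : 1 ≤ n)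
    (A : Matrix (Fin n) (Fin n) ℝ) (hsym : A.transpose = A)
    (hoff : ∀ i j, i ≠ j → A i j < 0) :
    ∃ (μ : ℝ) (v : Fin n → ℝ),
      A.mulVec v = μ • v ∧ (∀ i, 0 < v i) ∧
      (∀ (μ' : ℝ) (w : Fin n → ℝ), w ≠ 0 → A.mulVec w = μ' • w → μ ≤ μ') ∧
      (∀ w : Fin n → ℝ, A.mulVec w = μ • w → ∃ t : ℝ, w = t • v) := by
  haveI : NeZero n := ⟨by omega⟩
  have hA : A.IsHermitian := by
    rw [Matrix.IsHermitian, conjTranspose]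
    simpa [Matrix.map, starRingEnd_apply, Matrix.transpose] using hsym
  -- the minimal eigenvalue
  obtain ⟨i0, -, hi0⟩ := Finset.exists_min_image Finset.univ hA.eigenvalues
    ⟨0, Finset.mem_univ 0⟩
  set μ := hA.eigenvalues i0 with hμdef
  have hμ : ∀ i, μ ≤ hA.eigenvalues i := fun i => hi0 i (Finset.mem_univ i)
  -- A - μ • 1 is positive semidefinite
  have hray : ∀ x : Fin n → ℝ, μ * (x ⬝ᵥ x) ≤ x ⬝ᵥ (A *ᵥ x) := rayleigh_min' hA hμ
  set M : Matrix (Fin n) (Fin n) ℝ := A - μ • 1 with hMdef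
  have hMvec : ∀ x : Fin n → ℝ, M *ᵥ x = A *ᵥ x - μ • x := by
    intro x
    rw [hMdef, sub_mulVec, smul_mulVec, one_mulVec]
  have hM : M.PosSemidef := by
    refine Matrix.PosSemidef.of_dotProduct_mulVec_nonneg ?_ ?_
    · exact hA.sub (by simp [Matrix.IsHermitian])
    · intro x
      have := hray x
      simp only [star_trivial, hMvec x, dotProduct_sub, dotProduct_smul, smul_eq_mul]
      linarith
  -- key: quadratic form equality forces eigenvector
  have hker : ∀ x : Fin n → ℝ, x ⬝ᵥ (A *ᵥ x) = μ * (x ⬝ᵥ x) → A *ᵥ x = μ • x := by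
    intro x hx
    have h0 : star x ⬝ᵥ (M *ᵥ x) = 0 := by
      simp only [star_trivial, hMvec x, dotProduct_sub, dotProduct_smul, smul_eq_mul, hx]
      ring
    have := (hM.dotProduct_mulVec_zero_iff x).mp h0
    rw [hMvec x, sub_eq_zero] at this
    exact this
  -- |w| is also an eigenvector when w is
  have habs : ∀ w : Fin n → ℝ, A *ᵥ w = μ • w → A *ᵥ (fun i => |w i|) = μ • (fun i => |w i|) := by
    intro w hw
    set aw : Fin n → ℝ := fun i => |w i| with haw
    have hsq : aw ⬝ᵥ aw = w ⬝ᵥ w := by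
      simp [dotProduct, haw, ← sq_abs, pow_two]
    have hle : aw ⬝ᵥ (A *ᵥ aw) ≤ w ⬝ᵥ (A *ᵥ w) := by
      simp only [dotProduct, mulVec, Finset.mul_sum]
      apply Finset.sum_le_sum
      intro i _
      apply Finset.sum_le_sum
      intro j _
      by_cases h : i = j
      · subst h
        simp only [haw]
        refine le_of_eq ?_
        calc |w i| * (A i i * |w i|) = A i i * (|w i| * |w i|) := by ring
        _ = A i i * (w i * w i) := by rw [abs_mul_abs_self]
        _ = w i * (A i i * w i) := by ring
      · have h1 : w i * w j ≤ |w i| * |w j| := by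
          calc w i * w j ≤ |w i * w j| := le_abs_self _
          _ = |w i| * |w j| := abs_mul _ _
        have h2 : A i j < 0 := hoff i j h
        simp only [haw]
        nlinarith
    have heig : w ⬝ᵥ (A *ᵥ w) = μ * (w ⬝ᵥ w) := by
      rw [hw, dotProduct_smul, smul_eq_mul]
    have hge : μ * (aw ⬝ᵥ aw) ≤ aw ⬝ᵥ (A *ᵥ aw) := hray aw
    have : aw ⬝ᵥ (A *ᵥ aw) = μ * (aw ⬝ᵥ aw) := by
      rw [hsq] at hge ⊢
      linarith
    exact hker aw this
  -- eigenvector for μ with a zero nonneg entries is zero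
  have hzero : ∀ u : Fin n → ℝ, (∀ i, 0 ≤ u i) → A *ᵥ u = μ • u → ∀ k, u k = 0 → u = 0 := by
    intro u hu hAu k hk
    have hrow : ∑ j, A k j * u j = 0 := by
      have := congrFun hAu k
      simpa [mulVec, dotProduct, hk] using this
    have hterm : ∀ j ∈ Finset.univ, A k j * u j ≤ 0 := by
      intro j _
      by_cases h : j = k
      · subst h; rw [hk, mul_zero]
      · exact mul_nonpos_of_nonpos_of_nonneg (hoff k j (Ne.symm h)).le (hu j)
    have hall := (Finset.sum_eq_zero_iff_of_nonpos hterm).mp hrow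
    funext j
    by_cases h : j = k
    · subst h; exact hk
    · have := hall j (Finset.mem_univ j)
      have hAkj : A k j < 0 := hoff k j (Ne.symm h)
      have := mul_eq_zero.mp this
      rcases this with h' | h'
      · exact absurd h' hAkj.ne
      · exact h'
  -- any eigenvector for μ with a zero entry is zero
  have hzero' : ∀ u : Fin n → ℝ, A *ᵥ u = μ • u → ∀ k, u k = 0 → u = 0 := by
    intro u hAu k hk
    have h1 := habs u hAu
    have h2 : (fun i => |u i|) = 0 := by
      apply hzero _ (fun i => abs_nonneg _) h1 k
      simp [hk]
    funext j
    have := congrFun h2 j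
    simpa using abs_eq_zero.mp this
  -- the positive eigenvector
  set v0 : Fin n → ℝ := ⇑(hA.eigenvectorBasis i0) with hv0
  have hv0eig : A *ᵥ v0 = μ • v0 := hA.mulVec_eigenvectorBasis i0
  have hv0ne : v0 ≠ 0 := by
    intro h
    apply hA.eigenvectorBasis.orthonormal.ne_zero i0
    ext j
    exact congrFun h j
  set v : Fin n → ℝ := fun i => |v0 i| with hv
  have hveig : A *ᵥ v = μ • v := habs v0 hv0eig
  have hvne : v ≠ 0 := by
    intro h
    apply hv0ne
    funext j
    have := congrFun h j
    simpa [hv] using abs_eq_zero.mp this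
  have hvpos : ∀ i, 0 < v i := by
    intro i
    rcases lt_or_eq_of_le (abs_nonneg (v0 i)) with h | h
    · exact h
    · exact absurd (hzero' v hveig i h.symm) hvne
  refine ⟨μ, v, hveig, hvpos, ?_, ?_⟩
  · intro μ' w hw hAw
    have h1 : μ * (w ⬝ᵥ w) ≤ w ⬝ᵥ (A *ᵥ w) := hray w
    rw [hAw, dotProduct_smul, smul_eq_mul] at h1
    have h2 : 0 < w ⬝ᵥ w := by
      rcases lt_or_eq_of_le ((by simpa [dotProduct] using Finset.sum_nonneg (fun i (_ : i ∈ Finset.univ) => mul_self_nonneg (w i)) : (0:ℝ) ≤ w ⬝ᵥ w)) with h | h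
      · exact h
      · exact absurd ((dotProduct_self_eq_zero).mp h.symm) hw
    exact le_of_mul_le_mul_right (by linarith) h2
  · intro w hAw
    set k0 : Fin n := ⟨0, hn⟩ with hk0
    refine ⟨w k0 / v k0, ?_⟩
    set u : Fin n → ℝ := w - (w k0 / v k0) • v with hu
    have hueig : A *ᵥ u = μ • u := by
      rw [hu, mulVec_sub, mulVec_smul, hAw, hveig, smul_sub, smul_comm]
    have huk : u k0 = 0 := by
      simp only [hu, Pi.sub_apply, Pi.smul_apply, smul_eq_mul]
      rw [div_mul_cancel₀ _ (hvpos k0).ne']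
      ring
    have := hzero' u hueig k0 huk
    rw [hu, sub_eq_zero] at this
    exact this
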